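/- (Hex Lemma) In any 2-coloring of the vertices of the n×n hexagonal grid, there exists a monochromatic path of length at least n. -/

import Mathlib

/-- One direction of adjacency in the hexagonal grid:
`(i+1,j) ∼ (i,j)`, `(i+1,j) ∼ (i,j+1)`, `(i,j) ∼ (i,j+1)`. -/
def hexRel (u v : ℤ × ℤ) : Prop :=
  (u.1 = v.1 + 1 ∧ u.2 = v.2) ∨ (u.1 = v.1 + 1 ∧ v.2 = u.2 + 1) ∨
  (u.1 = v.1 ∧ v.2 = u.2 + 1)

/-- Adjacency in the hexagonal grid graph. -/
def hexAdj (u v : ℤ × ℤ) : Prop := hexRel u v ∨ hexRel v u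

/-- Membership in the `n × n` grid. -/
def inGrid (n : ℕ) (p : ℤ × ℤ) : Prop :=
  1 ≤ p.1 ∧ p.1 ≤ (n : ℤ) ∧ 1 ≤ p.2 ∧ p.2 ≤ (n : ℤ)

/-! ### Generic walk machinery -/

section walks
variable {α : Type*} {adj : α → α → Prop}

lemma reach_toList {a b : α} (h : Relation.ReflTransGen adj a b) :
    ∃ l : List α, l ≠ [] ∧ List.Chain' adj l ∧ l.head? = some a ∧ l.getLast? = some b ∧
      ∀ x ∈ l, x = a ∨ ∃ y, adj y x := by
  induction h with
  | refl => exact ⟨[a], by simp, List.isChain_singleton a, rfl, rfl, by simp⟩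
  | @tail m c h hr ih =>
      obtain ⟨l, hne, hc, hh, hl, hm⟩ := ih
      refine ⟨l ++ [c], by simp, ?_, ?_, ?_, ?_⟩
      · change List.IsChain _ _; rw [List.isChain_append]
        refine ⟨hc, List.isChain_singleton c, ?_⟩
        intro x hx y hy
        simp at hy; subst hy
        rw [hl] at hx; simp at hx; subst hx; exact hr
      · cases l with
        | nil => simp at hne
        | cons z t => simp at hh ⊢; exact hh
      · rw [List.getLast?_append]; simp
      · intro x hx
        rcases List.mem_append.mp hx with h1 | h2
        · exact hm x h1
        · simp at h2; subst h2; exact Or.inr ⟨m, hr⟩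

lemma getLast?_cons_ne {a : α} {l : List α} (h : l ≠ []) :
    (a :: l).getLast? = l.getLast? := by
  cases l with
  | nil => simp at h
  | cons c t => simp [List.getLast?_cons_cons]

lemma ivt_walk (f : α → ℤ) (N : ℤ) (hstep : ∀ a b, adj a b → f b ≤ f a + 1) :
    ∀ l : List α, List.Chain' adj l → ∀ a b, l.head? = some a → l.getLast? = some b →
      f a ≤ N → N ≤ f b →
      ∃ l', l' ≠ [] ∧ List.Chain' adj l' ∧ l'.head? = some a ∧
        (∃ b', l'.getLast? = some b' ∧ f b' = N) ∧ ∀ x ∈ l', x ∈ l ∧ f x ≤ N := by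
  intro l
  induction l with
  | nil => intro _ a b hh; simp at hh
  | cons a0 rest ih =>
    intro hc a b hh hl ha hb
    simp at hh; subst hh
    by_cases hN : N ≤ f a0
    · refine ⟨[a0], by simp, List.isChain_singleton a0, rfl, ⟨a0, rfl, le_antisymm ha hN⟩, ?_⟩
      intro x hx; simp at hx; subst hx; exact ⟨by simp, ha⟩
    · cases rest with
      | nil =>
        rw [show ([a0] : List α).getLast? = some a0 from rfl] at hl
        simp at hl; subst hl; exact absurd hb hN
      | cons b0 t =>
        have hadj : adj a0 b0 := (List.isChain_cons_cons.mp hc).1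
        have hc' : List.Chain' adj (b0 :: t) := (List.isChain_cons_cons.mp hc).2
        have hl' : (b0 :: t).getLast? = some b := by
          rw [← hl]; exact (getLast?_cons_ne (by simp)).symm
        have hb0 : f b0 ≤ N := by
          have := hstep _ _ hadj; omega
        obtain ⟨l', hne', hc'', hh', ⟨b', hlast', hfb'⟩, hmem'⟩ :=
          ih hc' b0 b rfl hl' hb0 hb
        refine ⟨a0 :: l', by simp, ?_, rfl, ⟨b', ?_, hfb'⟩, ?_⟩
        · change List.IsChain _ _; rw [List.isChain_cons]
          refine ⟨?_, hc''⟩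
          intro y hy; rw [hh'] at hy; simp at hy; subst hy; exact hadj
        · rw [getLast?_cons_ne hne']; exact hlast'
        · intro x hx
          rcases List.mem_cons.mp hx with h1 | h2
          · subst h1; exact ⟨by simp, by omega⟩
          · obtain ⟨hx1, hx2⟩ := hmem' x h2
            exact ⟨List.mem_cons_of_mem _ hx1, hx2⟩

lemma span_walk (f : α → ℤ) (hstep : ∀ a b, adj a b → f b ≤ f a + 1) :
    ∀ l : List α, List.Chain' adj l → ∀ a b, l.head? = some a → l.getLast? = some b →
      f b + 1 ≤ f a + l.length := by
  intro l
  induction l with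
  | nil => intro _ a b hh; simp at hh
  | cons a0 rest ih =>
    intro hc a b hh hl
    simp at hh; subst hh
    cases rest with
    | nil => simp at hl; subst hl; simp
    | cons b0 t =>
      have hadj : adj a0 b0 := (List.isChain_cons_cons.mp hc).1
      have := ih (List.isChain_cons_cons.mp hc).2 b0 b rfl
        (by rw [← hl]; exact (getLast?_cons_ne (by simp)).symm)
      have hb := hstep _ _ hadj
      simp only [List.length_cons] at *
      push_cast at *
      omega

lemma walk_to_path :
    ∀ (N : ℕ) (l : List α), l.length ≤ N → List.Chain' adj l → l ≠ [] →
    ∃ l', l' ≠ [] ∧ List.Chain' adj l' ∧ l'.Nodup ∧ l'.head? = l.head? ∧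
      l'.getLast? = l.getLast? ∧ ∀ x ∈ l', x ∈ l := by
  intro N
  induction N with
  | zero =>
    intro l hlen _ hne
    cases l with
    | nil => simp at hne
    | cons a t => simp at hlen
  | succ N ih =>
    intro l hlen hc hne
    cases l with
    | nil => simp at hne
    | cons a rest =>
      by_cases ha : a ∈ rest
      · obtain ⟨s, t, hst⟩ := List.append_of_mem ha
        have hrest : List.Chain' adj rest := hc.tail
        rw [hst] at hrest
        have hct : List.Chain' adj (a :: t) := (List.isChain_append.mp hrest).2.1
        have hlen' : (a :: t).length ≤ N := by
          rw [hst] at hlen; simp at hlen ⊢; omega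
        obtain ⟨l', hne', hc', hnd', hh', hl', hmem'⟩ := ih (a :: t) hlen' hct (by simp)
        refine ⟨l', hne', hc', hnd', by rw [hh']; rfl, ?_, ?_⟩
        · rw [hl']
          have h1 : (a :: rest).getLast? = rest.getLast? :=
            getLast?_cons_ne (by rw [hst]; simp)
          have hx : ∃ x, (a :: t).getLast? = some x := by
            cases t with
            | nil => exact ⟨a, rfl⟩
            | cons z zs => exact ⟨(z :: zs).getLast (by simp), by
                rw [getLast?_cons_ne (by simp)]; exact List.getLast?_eq_getLast _⟩
          obtain ⟨x, hx⟩ := hx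
          rw [h1, hst, List.getLast?_append, hx]
          simp
        · intro x hx
          have := hmem' x hx
          rw [hst]
          rcases List.mem_cons.mp this with h1 | h2
          · subst h1; exact List.mem_cons_self
          · exact List.mem_cons_of_mem _ (List.mem_append.mpr (Or.inr (List.mem_cons_of_mem _ h2)))
      · cases rest with
        | nil =>
          exact ⟨[a], by simp, List.isChain_singleton a, by simp, rfl, rfl, by simp⟩
        | cons b t =>
          have hlen' : (b :: t).length ≤ N := by simp at hlen ⊢; omega
          obtain ⟨l', hne', hc', hnd', hh', hl', hmem'⟩ :=
            ih (b :: t) hlen' (List.isChain_cons_cons.mp hc).2 (by simp)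
          refine ⟨a :: l', by simp, ?_, ?_, rfl, ?_, ?_⟩
          · change List.IsChain _ _; rw [List.isChain_cons]
            refine ⟨?_, hc'⟩
            intro y hy
            rw [hh'] at hy; simp at hy; subst hy
            exact (List.isChain_cons_cons.mp hc).1
          · rw [List.nodup_cons]
            exact ⟨fun hx => ha (hmem' a hx), hnd'⟩
          · rw [getLast?_cons_ne hne', hl']
            exact (getLast?_cons_ne (by simp)).symm
          · intro x hx
            rcases List.mem_cons.mp hx with h1 | h2
            · subst h1; exact List.mem_cons_self
            · exact List.mem_cons_of_mem _ (hmem' x h2)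

end walks

/-! ### Hex specific definitions -/

def hstep (Q : ℤ × ℤ → Prop) (u v : ℤ × ℤ) : Prop := hexAdj u v ∧ Q u ∧ Q v

def reach (Q : ℤ × ℤ → Prop) : ℤ × ℤ → ℤ × ℤ → Prop := Relation.ReflTransGen (hstep Q)

lemma hexAdj_symm {u v : ℤ × ℤ} (h : hexAdj u v) : hexAdj v u := h.symm

lemma reach_symm {Q : ℤ × ℤ → Prop} {u v : ℤ × ℤ} (h : reach Q u v) : reach Q v u :=
  haveI : Std.Symm (hstep Q) := ⟨fun _ _ h => ⟨hexAdj_symm h.1, h.2.2, h.2.1⟩⟩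
  Std.Symm.symm (r := Relation.ReflTransGen (hstep Q)) _ _ h

lemma hexAdj_coord {a b : ℤ × ℤ} (h : hexAdj a b) :
    b.2 ≤ a.2 + 1 ∧ a.2 ≤ b.2 + 1 ∧ b.1 ≤ a.1 + 1 ∧ a.1 ≤ b.1 + 1 := by
  rcases h with (⟨h1, h2⟩ | ⟨h1, h2⟩ | ⟨h1, h2⟩) | (⟨h1, h2⟩ | ⟨h1, h2⟩ | ⟨h1, h2⟩) <;> omega

def inT (n : ℕ) (p : ℤ × ℤ) : Prop := 1 ≤ p.1 ∧ 1 ≤ p.2 ∧ p.1 + p.2 ≤ (n : ℤ) + 1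

def tri (p q : ℤ × ℤ) : Prop := q = p ∨ q = (p.1 + 1, p.2) ∨ q = (p.1, p.2 + 1)

lemma adj_e1 (p : ℤ × ℤ) : hexAdj (p.1 + 1, p.2) p := Or.inl (Or.inl ⟨rfl, rfl⟩)
lemma adj_e2 (p : ℤ × ℤ) : hexAdj p (p.1, p.2 + 1) := Or.inl (Or.inr (Or.inr ⟨rfl, rfl⟩))
lemma adj_diag (p : ℤ × ℤ) : hexAdj (p.1 + 1, p.2) (p.1, p.2 + 1) :=
  Or.inl (Or.inr (Or.inl ⟨rfl, rfl⟩))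

lemma tri_adj {p a b : ℤ × ℤ} (ha : tri p a) (hb : tri p b) (hne : a ≠ b) : hexAdj a b := by
  rcases ha with rfl | rfl | rfl <;> rcases hb with rfl | rfl | rfl
  · exact absurd rfl hne
  · exact hexAdj_symm (adj_e1 _)
  · exact adj_e2 _
  · exact adj_e1 _
  · exact absurd rfl hne
  · exact adj_diag _
  · exact hexAdj_symm (adj_e2 _)
  · exact hexAdj_symm (adj_diag _)
  · exact absurd rfl hne

lemma tri_inT {n : ℕ} {p q : ℤ × ℤ} (hp : inT n p) (h : tri p q) : inT (n + 1) q := by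
  obtain ⟨h1, h2, h3⟩ := hp
  rcases h with rfl | rfl | rfl
  · exact ⟨h1, h2, by push_cast; omega⟩
  · refine ⟨?_, ?_, ?_⟩
    · show 1 ≤ p.1 + 1; omega
    · show 1 ≤ p.2; omega
    · show p.1 + 1 + p.2 ≤ ((n + 1 : ℕ) : ℤ) + 1; push_cast; omega
  · refine ⟨?_, ?_, ?_⟩
    · show 1 ≤ p.1; omega
    · show 1 ≤ p.2 + 1; omega
    · show p.1 + (p.2 + 1) ≤ ((n + 1 : ℕ) : ℤ) + 1; push_cast; omega

def maj (a b c : Bool) : Bool := (a && b) || (a && c) || (b && c)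

def majχ (χ : ℤ × ℤ → Bool) (p : ℤ × ℤ) : Bool :=
  maj (χ p) (χ (p.1 + 1, p.2)) (χ (p.1, p.2 + 1))

lemma maj_spec {a b c d : Bool} (h : maj a b c = d) :
    (a = d ∧ b = d) ∨ (a = d ∧ c = d) ∨ (b = d ∧ c = d) := by
  revert h; cases a <;> cases b <;> cases c <;> cases d <;> decide

lemma maj_rest1 {χ : ℤ × ℤ → Bool} {c : Bool} {p : ℤ × ℤ} (h : majχ χ p = c)
    (hp : ¬ χ p = c) : χ (p.1 + 1, p.2) = c ∧ χ (p.1, p.2 + 1) = c := by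
  rcases maj_spec h with ⟨h1, h2⟩ | ⟨h1, h2⟩ | ⟨h1, h2⟩ <;>
    first | exact absurd h1 hp | exact ⟨h1, h2⟩

lemma maj_rest2 {χ : ℤ × ℤ → Bool} {c : Bool} {p : ℤ × ℤ} (h : majχ χ p = c)
    (hp : ¬ χ (p.1 + 1, p.2) = c) : χ p = c ∧ χ (p.1, p.2 + 1) = c := by
  rcases maj_spec h with ⟨h1, h2⟩ | ⟨h1, h2⟩ | ⟨h1, h2⟩ <;>
    first | exact absurd h2 hp | exact absurd h1 hp | exact ⟨h1, h2⟩

lemma maj_rest3 {χ : ℤ × ℤ → Bool} {c : Bool} {p : ℤ × ℤ} (h : majχ χ p = c)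
    (hp : ¬ χ (p.1, p.2 + 1) = c) : χ p = c ∧ χ (p.1 + 1, p.2) = c := by
  rcases maj_spec h with ⟨h1, h2⟩ | ⟨h1, h2⟩ | ⟨h1, h2⟩ <;>
    first | exact absurd h2 hp | exact ⟨h1, h2⟩

lemma tri_connect {n : ℕ} {χ : ℤ × ℤ → Bool} {c : Bool} {p a b : ℤ × ℤ}
    (hp : inT n p) (ha : tri p a) (hb : tri p b) (hca : χ a = c) (hcb : χ b = c) :
    reach (fun q => inT (n + 1) q ∧ χ q = c) a b := by
  by_cases h : a = b
  · subst h; exact Relation.ReflTransGen.refl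
  · exact Relation.ReflTransGen.single
      ⟨tri_adj ha hb h, ⟨tri_inT hp ha, hca⟩, ⟨tri_inT hp hb, hcb⟩⟩

lemma edge_lift_rel {n : ℕ} {χ : ℤ × ℤ → Bool} {c : Bool} {u v : ℤ × ℤ}
    (hr : hexRel u v) (hu : inT n u) (hv : inT n v)
    (hcu : majχ χ u = c) (hcv : majχ χ v = c) :
    ∃ a b, tri u a ∧ tri v b ∧ χ a = c ∧ χ b = c ∧
      reach (fun q => inT (n + 1) q ∧ χ q = c) a b := by
  rcases hr with ⟨h1, h2⟩ | ⟨h1, h2⟩ | ⟨h1, h2⟩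
  · -- u = (v.1+1, v.2)
    have huv : u = (v.1 + 1, v.2) := Prod.ext h1 h2
    by_cases hs : χ u = c
    · exact ⟨u, u, Or.inl rfl, Or.inr (Or.inl huv), hs, hs, Relation.ReflTransGen.refl⟩
    · obtain ⟨_, hca⟩ := maj_rest1 hcu hs
      have hsv : ¬ χ (v.1 + 1, v.2) = c := by rw [← huv]; exact hs
      obtain ⟨_, hcb⟩ := maj_rest2 hcv hsv
      refine ⟨(u.1, u.2 + 1), (v.1, v.2 + 1), Or.inr (Or.inr rfl), Or.inr (Or.inr rfl),
        hca, hcb, Relation.ReflTransGen.single ⟨?_, ⟨tri_inT hu (Or.inr (Or.inr rfl)), hca⟩,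
          ⟨tri_inT hv (Or.inr (Or.inr rfl)), hcb⟩⟩⟩
      have : (u.1, u.2 + 1) = ((v.1, v.2 + 1).1 + 1, (v.1, v.2 + 1).2) := by
        simp only [Prod.mk.injEq]; constructor <;> omega
      rw [this]; exact adj_e1 (v.1, v.2 + 1)
  · -- u = (v.1+1, v.2-1), shared s = (u.1, u.2+1) = (v.1+1, v.2)
    by_cases hs : χ (u.1, u.2 + 1) = c
    · have hmem : tri v (u.1, u.2 + 1) := Or.inr (Or.inl (by
        simp only [Prod.mk.injEq]; constructor <;> omega))
      exact ⟨(u.1, u.2 + 1), (u.1, u.2 + 1), Or.inr (Or.inr rfl), hmem, hs, hs,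
        Relation.ReflTransGen.refl⟩
    · obtain ⟨hca, _⟩ := maj_rest3 hcu hs
      have hsv : ¬ χ (v.1 + 1, v.2) = c := by
        have : (v.1 + 1, v.2) = (u.1, u.2 + 1) := by
          simp only [Prod.mk.injEq]; constructor <;> omega
        rw [this]; exact hs
      obtain ⟨hcb, _⟩ := maj_rest2 hcv hsv
      exact ⟨u, v, Or.inl rfl, Or.inl rfl, hca, hcb,
        Relation.ReflTransGen.single ⟨Or.inl (Or.inr (Or.inl ⟨h1, h2⟩)),
          ⟨tri_inT hu (Or.inl rfl), hca⟩, ⟨tri_inT hv (Or.inl rfl), hcb⟩⟩⟩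
  · -- v = (u.1, u.2+1)
    have hvu : v = (u.1, u.2 + 1) := Prod.ext h1.symm h2
    by_cases hs : χ v = c
    · exact ⟨v, v, Or.inr (Or.inr hvu), Or.inl rfl, hs, hs, Relation.ReflTransGen.refl⟩
    · have hsu : ¬ χ (u.1, u.2 + 1) = c := by rw [← hvu]; exact hs
      obtain ⟨_, hca⟩ := maj_rest3 hcu hsu
      obtain ⟨hcb, _⟩ := maj_rest1 hcv hs
      refine ⟨(u.1 + 1, u.2), (v.1 + 1, v.2), Or.inr (Or.inl rfl), Or.inr (Or.inl rfl),
        hca, hcb, Relation.ReflTransGen.single ⟨?_, ⟨tri_inT hu (Or.inr (Or.inl rfl)), hca⟩,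
          ⟨tri_inT hv (Or.inr (Or.inl rfl)), hcb⟩⟩⟩
      have : (v.1 + 1, v.2) = ((u.1 + 1, u.2).1, (u.1 + 1, u.2).2 + 1) := by
        simp only [Prod.mk.injEq]; constructor <;> omega
      rw [this]; exact adj_e2 (u.1 + 1, u.2)

lemma edge_lift {n : ℕ} {χ : ℤ × ℤ → Bool} {c : Bool} {u v : ℤ × ℤ}
    (h : hstep (fun p => inT n p ∧ majχ χ p = c) u v) :
    ∃ a b, tri u a ∧ tri v b ∧ χ a = c ∧ χ b = c ∧
      reach (fun q => inT (n + 1) q ∧ χ q = c) a b := by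
  obtain ⟨hadj, ⟨hu, hcu⟩, ⟨hv, hcv⟩⟩ := h
  rcases hadj with hr | hr
  · exact edge_lift_rel hr hu hv hcu hcv
  · obtain ⟨a, b, ta, tb, ca, cb, r⟩ := edge_lift_rel hr hv hu hcv hcu
    exact ⟨b, a, tb, ta, cb, ca, reach_symm r⟩

lemma reach_lift {n : ℕ} {χ : ℤ × ℤ → Bool} {c : Bool} {u v : ℤ × ℤ}
    (h : reach (fun p => inT n p ∧ majχ χ p = c) u v) (hu : inT n u) :
    ∀ a b, tri u a → tri v b → χ a = c → χ b = c →
      reach (fun q => inT (n + 1) q ∧ χ q = c) a b := by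
  induction h with
  | refl => intro a b ta tb ca cb; exact tri_connect hu ta tb ca cb
  | @tail m w _ hs ih =>
    intro a b ta tb ca cb
    obtain ⟨x, y, tx, ty, cx, cy, rxy⟩ := edge_lift hs
    have h1 := ih a x ta tx ca cx
    have h3 := tri_connect hs.2.2.1 ty tb cy cb
    exact (h1.trans rxy).trans h3

lemma side_top {χ : ℤ × ℤ → Bool} {c : Bool} {p : ℤ × ℤ} (h : majχ χ p = c) (hp : p.1 = 1) :
    ∃ a, tri p a ∧ χ a = c ∧ a.1 = 1 := by
  rcases maj_spec h with ⟨h1, _⟩ | ⟨h1, _⟩ | ⟨_, h2⟩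
  · exact ⟨p, Or.inl rfl, h1, hp⟩
  · exact ⟨p, Or.inl rfl, h1, hp⟩
  · exact ⟨(p.1, p.2 + 1), Or.inr (Or.inr rfl), h2, hp⟩

lemma side_left {χ : ℤ × ℤ → Bool} {c : Bool} {p : ℤ × ℤ} (h : majχ χ p = c) (hp : p.2 = 1) :
    ∃ a, tri p a ∧ χ a = c ∧ a.2 = 1 := by
  rcases maj_spec h with ⟨h1, _⟩ | ⟨h1, _⟩ | ⟨h1, _⟩
  · exact ⟨p, Or.inl rfl, h1, hp⟩
  · exact ⟨p, Or.inl rfl, h1, hp⟩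
  · exact ⟨(p.1 + 1, p.2), Or.inr (Or.inl rfl), h1, hp⟩

lemma side_diag {n : ℕ} {χ : ℤ × ℤ → Bool} {c : Bool} {p : ℤ × ℤ} (h : majχ χ p = c)
    (hp : p.1 + p.2 = (n : ℤ) + 1) :
    ∃ a, tri p a ∧ χ a = c ∧ a.1 + a.2 = (n : ℤ) + 2 := by
  rcases maj_spec h with ⟨_, h2⟩ | ⟨_, h2⟩ | ⟨h1, _⟩
  · exact ⟨(p.1 + 1, p.2), Or.inr (Or.inl rfl), h2, by simp; omega⟩
  · exact ⟨(p.1, p.2 + 1), Or.inr (Or.inr rfl), h2, by simp; omega⟩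
  · exact ⟨(p.1 + 1, p.2), Or.inr (Or.inl rfl), h1, by simp; omega⟩

lemma Ylemma : ∀ (n : ℕ), 0 < n → ∀ (χ : ℤ × ℤ → Bool), ∃ (c : Bool) (u v w : ℤ × ℤ),
    (inT n u ∧ χ u = c) ∧ (inT n v ∧ χ v = c) ∧ (inT n w ∧ χ w = c) ∧
    u.1 = 1 ∧ v.2 = 1 ∧ w.1 + w.2 = (n : ℤ) + 1 ∧
    reach (fun p => inT n p ∧ χ p = c) u v ∧ reach (fun p => inT n p ∧ χ p = c) u w := by
  intro n
  induction n with
  | zero => intro h; exact absurd h (lt_irrefl 0)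
  | succ n ih =>
    intro _ χ
    rcases Nat.eq_zero_or_pos n with h0 | hpos
    · subst h0
      have h11 : inT 1 ((1 : ℤ), (1 : ℤ)) := by refine ⟨le_refl _, le_refl _, by norm_num⟩
      exact ⟨χ (1, 1), (1, 1), (1, 1), (1, 1), ⟨h11, rfl⟩, ⟨h11, rfl⟩, ⟨h11, rfl⟩,
        rfl, rfl, by norm_num, Relation.ReflTransGen.refl, Relation.ReflTransGen.refl⟩
    · obtain ⟨c, u, v, w, ⟨hu, hcu⟩, ⟨hv, hcv⟩, ⟨hw, hcw⟩, hu1, hv2, hwsum, ruv, ruw⟩ :=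
        ih hpos (majχ χ)
      obtain ⟨a, ta, ca, ha1⟩ := side_top hcu hu1
      obtain ⟨b, tb, cb, hb2⟩ := side_left hcv hv2
      obtain ⟨d, td, cd, hdsum⟩ := side_diag hcw hwsum
      refine ⟨c, a, b, d, ⟨tri_inT hu ta, ca⟩, ⟨tri_inT hv tb, cb⟩, ⟨tri_inT hw td, cd⟩,
        ha1, hb2, ?_, ?_, ?_⟩
      · push_cast; omega
      · exact reach_lift ruv hu a b ta tb ca cb
      · exact reach_lift ruw hu a d ta td ca cd

/-! ### Assembly -/

lemma assemble (n : ℕ) (hn : 0 < n) (χ : ℤ × ℤ → Bool) (c : Bool) (Q : ℤ × ℤ → Prop)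
    (f : ℤ × ℤ → ℤ)
    (hstepf : ∀ x y : ℤ × ℤ, hexAdj x y → f y ≤ f x + 1)
    (hgood : ∀ x, Q x → f x ≤ (n : ℤ) → inGrid n x ∧ χ x = c)
    (a b : ℤ × ℤ) (hr : reach Q a b) (hQa : Q a) (hfa : f a = 1) (hfb : (n : ℤ) ≤ f b) :
    ∃ (k : ℕ) (p : Fin k → ℤ × ℤ), n ≤ k ∧ Function.Injective p ∧
      (∀ t, inGrid n (p t)) ∧
      (∀ t s : Fin k, (t : ℕ) + 1 = (s : ℕ) → hexAdj (p t) (p s)) ∧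
      (∀ t s : Fin k, χ (p t) = χ (p s)) := by
  have hn1 : (1 : ℤ) ≤ (n : ℤ) := by exact_mod_cast hn
  obtain ⟨l, hne, hc, hh, hl, hm⟩ := reach_toList hr
  have hQ : ∀ x ∈ l, Q x := by
    intro x hx
    rcases hm x hx with rfl | ⟨y, hy⟩
    · exact hQa
    · exact hy.2.2
  have hstepf' : ∀ x y : ℤ × ℤ, hstep Q x y → f y ≤ f x + 1 := fun x y h => hstepf x y h.1
  obtain ⟨l₁, hne₁, hc₁, hh₁, ⟨b', hl₁, hfb'⟩, hm₁⟩ :=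
    ivt_walk f (n : ℤ) hstepf' l hc a b hh hl (by omega) hfb
  obtain ⟨l₂, hne₂, hc₂, hnd₂, hh₂, hl₂, hm₂⟩ := walk_to_path l₁.length l₁ le_rfl hc₁ hne₁
  have hmem : ∀ x ∈ l₂, inGrid n x ∧ χ x = c := by
    intro x hx
    obtain ⟨hx1, hx2⟩ := hm₁ x (hm₂ x hx)
    exact hgood x (hQ x hx1) hx2
  have hlen : n ≤ l₂.length := by
    have := span_walk f hstepf' l₂ hc₂ a b'
      (by rw [hh₂]; exact hh₁) (by rw [hl₂]; exact hl₁)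
    omega
  have hchain : List.Chain' hexAdj l₂ := hc₂.imp (fun _ _ h => h.1)
  refine ⟨l₂.length, l₂.get, hlen, List.nodup_iff_injective_get.mp hnd₂, ?_, ?_, ?_⟩
  · intro t; exact (hmem _ (l₂.get_mem t)).1
  · intro t s hts
    have h1 : (t : ℕ) + 1 < l₂.length := by have := s.isLt; omega
    have h2 := List.isChain_iff_getElem.mp hchain (t : ℕ) h1
    convert h2 using 2
    all_goals simp [← hts]
  · intro t s
    rw [(hmem _ (l₂.get_mem t)).2, (hmem _ (l₂.get_mem s)).2]

def ext2 (n : ℕ) (χ : ℤ × ℤ → Bool) (p : ℤ × ℤ) : Bool :=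
  if (n : ℤ) < p.1 then true else if (n : ℤ) < p.2 then false else χ p


/-- Hex Lemma: any 2-colouring of the `n × n` hexagonal grid contains a
monochromatic path of length at least `n` (at least `n` vertices). -/
theorem stmt15 (n : ℕ) (hn : 0 < n) (χ : ℤ × ℤ → Bool) :
    ∃ (k : ℕ) (p : Fin k → ℤ × ℤ), n ≤ k ∧ Function.Injective p ∧
      (∀ t, inGrid n (p t)) ∧
      (∀ t s : Fin k, (t : ℕ) + 1 = (s : ℕ) → hexAdj (p t) (p s)) ∧
      (∀ t s : Fin k, χ (p t) = χ (p s)) := by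
  set m := 2 * n - 1 with hm
  have hmpos : 0 < m := by omega
  have hmz : (m : ℤ) + 1 = 2 * (n : ℤ) := by omega
  obtain ⟨c, u, v, w, ⟨hu, hcu⟩, ⟨hv, hcv⟩, ⟨hw, hcw⟩, hu1, hv2, hwsum, ruv, ruw⟩ :=
    Ylemma m hmpos (ext2 n χ)
  set Q := fun p => inT m p ∧ ext2 n χ p = c with hQdef
  cases c with
  | false =>
    -- white: crosses from column 1 to column n
    have hgood : ∀ x, Q x → x.2 ≤ (n : ℤ) → inGrid n x ∧ χ x = false := by
      intro x ⟨⟨hx1, hx2, _⟩, hxc⟩ hxn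
      unfold ext2 at hxc
      split_ifs at hxc with h1 h2
      · omega
      · exact ⟨⟨hx1, by omega, hx2, hxn⟩, hxc⟩
    have hwn : (n : ℤ) ≤ w.2 := by
      have hw1 : ¬ (n : ℤ) < w.1 := by
        intro h
        have := hw.2.1
        unfold Q at *
        unfold ext2 at hcw
        split_ifs at hcw
      omega
    exact assemble n hn χ false Q (fun p => p.2) (fun x y h => (hexAdj_coord h).1)
      (fun x hx hxn => hgood x hx hxn) v w ((reach_symm ruv).trans ruw) ⟨hv, hcv⟩ hv2 hwn
  | true =>
    -- black: crosses from row 1 to row n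
    have hgood : ∀ x, Q x → x.1 ≤ (n : ℤ) → inGrid n x ∧ χ x = true := by
      intro x ⟨⟨hx1, hx2, _⟩, hxc⟩ hxn
      unfold ext2 at hxc
      split_ifs at hxc with h1 h2
      · omega
      · exact ⟨⟨hx1, hxn, hx2, by omega⟩, hxc⟩
    have hwn : (n : ℤ) ≤ w.1 := by
      by_contra h
      push_neg at h
      have h2 : (n : ℤ) < w.2 := by omega
      have h1 : ¬ (n : ℤ) < w.1 := by omega
      unfold ext2 at hcw
      split_ifs at hcw
    exact assemble n hn χ true Q (fun p => p.1) (fun x y h => (hexAdj_coord h).2.2.1)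
      (fun x hx hxn => hgood x hx hxn) u w ruw ⟨hu, hcu⟩ hu1 hwn
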